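/- For every natural number k and the function f : ℍ → ℂ, f(x) = (z₂(x))^k, one has for all x ∈ ℍ: Df(x)[x·e₁ − e₁·x] = −2k·𝕚·f(x), where Df(x) is the real Fréchet derivative of f at x and x·e₁ − e₁·x is the quaternionic commutator. (Equivalently, f = z₂^k is an eigenvector of eigenvalue 2k of the complexified infinitesimal conjugation action of e₁.) -/

import Mathlib

open Quaternion

noncomputable section

/-- The imaginary quaternion unit `e₁`. -/
def e1 : ℍ[ℝ] := ⟨0, 1, 0, 0⟩

/-- The complex coordinate `z₂(x) = x₂ + x₃·𝕚`. -/
def z2 (x : ℍ[ℝ]) : ℂ := (x.imJ : ℂ) + (x.imK : ℂ) * Complex.I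

/-- `z2` as a real-linear map. -/
def z2lin : ℍ[ℝ] →ₗ[ℝ] ℂ where
  toFun := z2
  map_add' x y := by simp [z2, Complex.ofReal_add]; ring
  map_smul' r x := by
    simp [z2, Complex.ofReal_mul, Complex.real_smul]; ring

def z2L : ℍ[ℝ] →L[ℝ] ℂ := z2lin.toContinuousLinearMap

lemma z2L_apply (x : ℍ[ℝ]) : z2L x = z2 x := rfl

lemma hasFDerivAt_z2 (x : ℍ[ℝ]) : HasFDerivAt z2 z2L x :=
  z2L.hasFDerivAt

lemma hasFDerivAt_z2_pow (k : ℕ) (x : ℍ[ℝ]) :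
    HasFDerivAt (fun y => z2 y ^ (k + 1)) ((((k : ℂ) + 1) * z2 x ^ k) • z2L) x := by
  induction k with
  | zero => simpa using hasFDerivAt_z2 x
  | succ n ih =>
    have h2 := ih.mul (hasFDerivAt_z2 x)
    simp only [Pi.mul_def, ← pow_succ] at h2
    refine h2.congr_fderiv ?_
    ext v
    simp only [ContinuousLinearMap.smul_apply, ContinuousLinearMap.add_apply,
      smul_eq_mul, z2L_apply]
    push_cast
    ring

theorem z2_pow_eigenvector (k : ℕ) :
    ∀ x : ℍ[ℝ],
      fderiv ℝ (fun y => z2 y ^ k) x (x * e1 - e1 * x)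
        = -2 * (k : ℂ) * Complex.I * z2 x ^ k := by
  intro x
  have hz : z2 (x * e1 - e1 * x) = -2 * Complex.I * z2 x := by
    simp [z2, Quaternion.ext_iff, Complex.ext_iff, Quaternion.imJ_mul, Quaternion.imK_mul]
    simp [e1]
    constructor <;> ring
  cases k with
  | zero => simp
  | succ m =>
    rw [(hasFDerivAt_z2_pow m x).fderiv]
    simp only [ContinuousLinearMap.smul_apply, smul_eq_mul, z2L_apply, hz]
    push_cast
    ring
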